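/- arXiv:1504.04059 — 3 statements merged into one kernel-verified Lean document; each statement's English description precedes it below -/
import Mathlib

section
/- Let n ≥ 1. Consider weights in Z^{2n} (or Q^{2n}) written as λ = (λ_1,...,λ_n | μ_1,...,μ_n). Suppose λ is a linear combination with nonnegative integer coefficients of the vectors ε_i − δ_j for i > j (where ε_i is the i-th standard basis vector among the first n coordinates and δ_j the j-th among the last n) and δ_k − ε_l for k > l. If λ satisfies the dominance conditions ⟨ε_s − ε_{s+1}, λ⟩ ≥ 0 and ⟨δ_s − δ_{s+1}, λ⟩ ≥ 0 for all 1 ≤ s ≤ n−1 (with respect to the standard inner product), then λ = 0. -/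
/-- `ε_i`, the `i`-th standard basis vector among the first `n` coordinates of `ℚ^{2n}`. -/
noncomputable def epsV (n : ℕ) (i : Fin n) : (Fin n ⊕ Fin n) → ℚ := Pi.single (Sum.inl i) 1

/-- `δ_j`, the `j`-th standard basis vector among the last `n` coordinates of `ℚ^{2n}`. -/
noncomputable def deltaV (n : ℕ) (j : Fin n) : (Fin n ⊕ Fin n) → ℚ := Pi.single (Sum.inr j) 1

/-- The standard inner product on `ℚ^{2n}`. -/
noncomputable def inn (n : ℕ) (v w : (Fin n ⊕ Fin n) → ℚ) : ℚ := ∑ t, v t * w t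

/-- If `λ` is a nonnegative integer combination of the vectors `ε_i - δ_j` (`i > j`) and
`δ_k - ε_l` (`k > l`), and `λ` satisfies the dominance conditions
`⟨ε_s - ε_{s+1}, λ⟩ ≥ 0` and `⟨δ_s - δ_{s+1}, λ⟩ ≥ 0` for all `1 ≤ s ≤ n-1`,
then `λ = 0`. -/
theorem stmt1 (n : ℕ) (hn : 1 ≤ n)
    (a b : Fin n → Fin n → ℕ)
    (ha : ∀ i j : Fin n, ¬ (j < i) → a i j = 0)
    (hb : ∀ i j : Fin n, ¬ (j < i) → b i j = 0)
    (lam : (Fin n ⊕ Fin n) → ℚ)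
    (hlam : lam = (∑ i, ∑ j, (a i j : ℚ) • (epsV n i - deltaV n j))
              + (∑ i, ∑ j, (b i j : ℚ) • (deltaV n i - epsV n j)))
    (hdom1 : ∀ (s : Fin n) (hs : (s : ℕ) + 1 < n),
      0 ≤ inn n (epsV n s - epsV n ⟨(s : ℕ) + 1, hs⟩) lam)
    (hdom2 : ∀ (s : Fin n) (hs : (s : ℕ) + 1 < n),
      0 ≤ inn n (deltaV n s - deltaV n ⟨(s : ℕ) + 1, hs⟩) lam) :
    lam = 0 := by
  classical
  -- coordinates of lam
  have hx : ∀ t : Fin n, lam (Sum.inl t) = (∑ j, (a t j : ℚ)) - ∑ i, (b i t : ℚ) := by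
    intro t
    have h := congrFun hlam (Sum.inl t)
    simp [epsV, deltaV, Pi.single_apply, Finset.sum_apply, mul_ite, Finset.sum_ite_eq,
      Finset.sum_sub_distrib] at h
    rw [h]; ring
  have hy : ∀ t : Fin n, lam (Sum.inr t) = (∑ j, (b t j : ℚ)) - ∑ i, (a i t : ℚ) := by
    intro t
    have h := congrFun hlam (Sum.inr t)
    simp [epsV, deltaV, Pi.single_apply, Finset.sum_apply, mul_ite, Finset.sum_ite_eq,
      Finset.sum_sub_distrib] at h
    rw [h]; ring
  set z : Fin n → ℚ := fun t => lam (Sum.inl t) + lam (Sum.inr t) with hzdef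
  -- dominance: z is antitone step by step
  have hstep : ∀ (s : Fin n) (hs : (s : ℕ) + 1 < n), z ⟨(s : ℕ) + 1, hs⟩ ≤ z s := by
    intro s hs
    have h1 := hdom1 s hs
    have h2 := hdom2 s hs
    have e1 : inn n (epsV n s - epsV n ⟨(s : ℕ) + 1, hs⟩) lam
        = lam (Sum.inl s) - lam (Sum.inl ⟨(s : ℕ) + 1, hs⟩) := by
      simp [inn, epsV, Pi.single_apply, sub_mul, Finset.sum_sub_distrib, Finset.sum_ite_eq]
    have e2 : inn n (deltaV n s - deltaV n ⟨(s : ℕ) + 1, hs⟩) lam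
        = lam (Sum.inr s) - lam (Sum.inr ⟨(s : ℕ) + 1, hs⟩) := by
      simp [inn, deltaV, Pi.single_apply, sub_mul, Finset.sum_sub_distrib, Finset.sum_ite_eq]
    rw [e1] at h1; rw [e2] at h2
    simp only [hzdef]
    linarith
  -- full antitonicity
  have hmono : ∀ s t : Fin n, s ≤ t → z t ≤ z s := by
    intro s t hst
    obtain ⟨m, hm⟩ := t
    induction m with
    | zero =>
        have : s = ⟨0, hm⟩ := le_antisymm hst (Fin.mk_le_of_le_val (Nat.zero_le _))
        rw [this]
    | succ m ih =>
        have hm' : m < n := Nat.lt_of_succ_lt hm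
        rcases Nat.lt_or_ge (s : ℕ) (m + 1) with h | h
        · have hs : (s : ℕ) ≤ m := Nat.lt_succ_iff.mp h
          have h1 : z (⟨m + 1, hm⟩ : Fin n) ≤ z ⟨m, hm'⟩ := hstep ⟨m, hm'⟩ hm
          have h2 : z (⟨m, hm'⟩ : Fin n) ≤ z s := ih hm' hs
          linarith
        · have : s = ⟨m + 1, hm⟩ := le_antisymm hst (by exact h)
          rw [this]
  -- total sum of z is zero
  have hsum0 : ∑ t, z t = 0 := by
    simp only [hzdef]
    rw [Finset.sum_add_distrib]
    have hA : ∑ t, lam (Sum.inl t) = (∑ t, ∑ j, (a t j : ℚ)) - ∑ t, ∑ i, (b i t : ℚ) := by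
      rw [← Finset.sum_sub_distrib]; exact Finset.sum_congr rfl fun t _ => hx t
    have hB : ∑ t, lam (Sum.inr t) = (∑ t, ∑ j, (b t j : ℚ)) - ∑ t, ∑ i, (a i t : ℚ) := by
      rw [← Finset.sum_sub_distrib]; exact Finset.sum_congr rfl fun t _ => hy t
    rw [hA, hB, Finset.sum_comm (f := fun i t => (b i t : ℚ)),
      Finset.sum_comm (f := fun i t => (a i t : ℚ))]
    ring
  -- tail sums are nonpositive
  have htail : ∀ s : Fin n, ∑ t ∈ Finset.univ.filter (fun t => s < t), z t ≤ 0 := by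
    intro s
    by_cases hs : (s : ℕ) + 1 < n
    · set s' : Fin n := ⟨(s : ℕ) + 1, hs⟩ with hs'def
      rcases le_or_gt (z s') 0 with hc | hc
      · apply Finset.sum_nonpos
        intro t ht
        rw [Finset.mem_filter] at ht
        have : s' ≤ t := by
          have := ht.2
          simp only [hs'def, Fin.le_def, Fin.lt_def] at *
          omega
        exact le_trans (hmono s' t this) hc
      · have hhead : 0 ≤ ∑ t ∈ Finset.univ.filter (fun t => ¬ s < t), z t := by
          apply Finset.sum_nonneg
          intro t ht
          rw [Finset.mem_filter] at ht
          have hts : t ≤ s := not_lt.mp ht.2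
          have hss' : s ≤ s' := by simp [hs'def, Fin.le_def]
          have := hmono t s' (le_trans hts hss')
          linarith
        have hsplit := Finset.sum_filter_add_sum_filter_not Finset.univ
          (fun t => s < t) z
        rw [hsum0] at hsplit
        linarith
    · have : Finset.univ.filter (fun t => s < t) = (∅ : Finset (Fin n)) := by
        ext t
        simp only [Finset.mem_filter, Finset.mem_univ, true_and, Finset.notMem_empty,
          iff_false, not_lt, Fin.le_def, Fin.lt_def]
        omega
      rw [this, Finset.sum_empty]
  -- the weighted sum S
  have hS_upper : ∑ t : Fin n, (t.val : ℚ) * z t ≤ 0 := by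
    have key : ∑ t : Fin n, (t.val : ℚ) * z t
        = ∑ s : Fin n, ∑ t ∈ Finset.univ.filter (fun t => s < t), z t := by
      calc ∑ t : Fin n, (t.val : ℚ) * z t
          = ∑ t : Fin n, ∑ s : Fin n, (if s < t then z t else 0) := by
            refine Finset.sum_congr rfl fun t _ => ?_
            rw [← Finset.sum_filter]
            have hfil : Finset.univ.filter (fun s : Fin n => s < t) = Finset.Iio t := by
              ext s; simp
            rw [hfil, Finset.sum_const, Fin.card_Iio, nsmul_eq_mul]
        _ = ∑ s : Fin n, ∑ t : Fin n, (if s < t then z t else 0) := Finset.sum_comm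
        _ = ∑ s : Fin n, ∑ t ∈ Finset.univ.filter (fun t => s < t), z t := by
            refine Finset.sum_congr rfl fun s _ => ?_
            rw [Finset.sum_filter]
    rw [key]
    exact Finset.sum_nonpos fun s _ => htail s
  -- S expressed via coefficients
  have hS_eq : ∑ t : Fin n, (t.val : ℚ) * z t
      = ∑ i, ∑ j, ((i.val : ℚ) - (j.val : ℚ)) * ((a i j : ℚ) + (b i j : ℚ)) := by
    have expand : ∀ t : Fin n, (t.val : ℚ) * z t
        = (∑ j, (t.val : ℚ) * (a t j : ℚ)) - (∑ i, (t.val : ℚ) * (b i t : ℚ))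
          + ((∑ j, (t.val : ℚ) * (b t j : ℚ)) - (∑ i, (t.val : ℚ) * (a i t : ℚ))) := by
      intro t
      simp only [hzdef, hx t, hy t]
      rw [← Finset.mul_sum, ← Finset.mul_sum, ← Finset.mul_sum, ← Finset.mul_sum]
      ring
    rw [Finset.sum_congr rfl fun t _ => expand t]
    rw [Finset.sum_add_distrib, Finset.sum_sub_distrib, Finset.sum_sub_distrib]
    rw [show (∑ t : Fin n, ∑ i : Fin n, (t.val : ℚ) * (b i t : ℚ))
        = ∑ i : Fin n, ∑ t : Fin n, (t.val : ℚ) * (b i t : ℚ) from Finset.sum_comm]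
    rw [show (∑ t : Fin n, ∑ i : Fin n, (t.val : ℚ) * (a i t : ℚ))
        = ∑ i : Fin n, ∑ t : Fin n, (t.val : ℚ) * (a i t : ℚ) from Finset.sum_comm]
    simp only [sub_mul, add_mul, mul_add, Finset.sum_add_distrib, Finset.sum_sub_distrib]
    ring
  -- lower bound: S ≥ sum of coefficients
  have hlower : ∑ i, ∑ j, ((a i j : ℚ) + (b i j : ℚ))
      ≤ ∑ i, ∑ j, ((i.val : ℚ) - (j.val : ℚ)) * ((a i j : ℚ) + (b i j : ℚ)) := by
    refine Finset.sum_le_sum fun i _ => Finset.sum_le_sum fun j _ => ?_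
    by_cases hij : j < i
    · have h1 : (1 : ℚ) ≤ ((i : ℕ) : ℚ) - ((j : ℕ) : ℚ) := by
        have : (j : ℕ) + 1 ≤ (i : ℕ) := hij
        have := Nat.cast_le (α := ℚ) |>.mpr this
        push_cast at this ⊢
        linarith
      have h2 : (0 : ℚ) ≤ (a i j : ℚ) + (b i j : ℚ) := by positivity
      nlinarith
    · rw [ha i j hij, hb i j hij]; norm_num
  have hsumzero : ∑ i, ∑ j, ((a i j : ℚ) + (b i j : ℚ)) = 0 := by
    have h1 : ∑ i, ∑ j, ((a i j : ℚ) + (b i j : ℚ)) ≤ 0 := by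
      calc ∑ i, ∑ j, ((a i j : ℚ) + (b i j : ℚ))
          ≤ ∑ i, ∑ j, ((i.val : ℚ) - (j.val : ℚ)) * ((a i j : ℚ) + (b i j : ℚ)) := hlower
        _ = ∑ t : Fin n, (t.val : ℚ) * z t := hS_eq.symm
        _ ≤ 0 := hS_upper
    have h2 : 0 ≤ ∑ i, ∑ j, ((a i j : ℚ) + (b i j : ℚ)) :=
      Finset.sum_nonneg fun i _ => Finset.sum_nonneg fun j _ => by positivity
    linarith
  -- all coefficients vanish
  have hzero : ∀ i j : Fin n, (a i j : ℚ) = 0 ∧ (b i j : ℚ) = 0 := by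
    have h := (Finset.sum_eq_zero_iff_of_nonneg
      (fun i _ => Finset.sum_nonneg fun j _ => by positivity)).mp hsumzero
    intro i j
    have h' := (Finset.sum_eq_zero_iff_of_nonneg (fun j _ => by positivity)).mp
      (h i (Finset.mem_univ i)) j (Finset.mem_univ j)
    have ha' : (0:ℚ) ≤ (a i j : ℚ) := Nat.cast_nonneg _
    have hb' : (0:ℚ) ≤ (b i j : ℚ) := Nat.cast_nonneg _
    constructor <;> linarith
  rw [hlam]
  have e1 : (∑ i, ∑ j, (a i j : ℚ) • (epsV n i - deltaV n j)) = 0 :=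
    Finset.sum_eq_zero fun i _ => Finset.sum_eq_zero fun j _ => by
      rw [(hzero i j).1, zero_smul]
  have e2 : (∑ i, ∑ j, (b i j : ℚ) • (deltaV n i - epsV n j)) = 0 :=
    Finset.sum_eq_zero fun i _ => Finset.sum_eq_zero fun j _ => by
      rw [(hzero i j).2, zero_smul]
  rw [e1, e2, add_zero]
end

section
/- Let G be a group and res : T(g) → T(p) a group homomorphism between the endotrivial groups, and Ind : stable p-modules → stable g-modules a functor satisfying the projection formula Ind(M|_p ⊗ N) ≅ M ⊗ Ind(N) for g-modules M, with Ind(k_ev) ≅ k_ev and Ind taking projectives to projectives. Then res is injective: if M is an indecomposable endotrivial g-module with M|_p ≅ k_ev ⊕ P (P projective), then M ≅ k_ev. -/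
universe u

/-- Injectivity of restriction `T(g) → T(p)`: if `Ind` satisfies the projection formula
`Ind(M|_p ⊗ N) ≅ M ⊗ Ind(N)`, sends `k_ev` to `k_ev` and direct sums to direct sums, and
`M` is an indecomposable endotrivial `g`-module with `M|_p ≅ k_ev ⊕ P` (`P` projective),
then `M ≅ k_ev`.  Here `Og`, `Op` are the `g`- and `p`-modules up to the isomorphism
relations `isog`, `isop`; `zg` is the zero module. -/
theorem stmt14 (Og Op : Type u)
    (isog : Og → Og → Prop) (isop : Op → Op → Prop)
    (hg : Equivalence isog) (hp : Equivalence isop)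
    (res : Og → Op) (Ind : Op → Og)
    (sumg : Og → Og → Og) (sump : Op → Op → Op)
    (tensg : Og → Og → Og)
    (kg zg : Og) (kp : Op)
    (Projp : Op → Prop) (Projg : Og → Prop)
    (hIndIso : ∀ a b, isop a b → isog (Ind a) (Ind b))
    (hIndSum : ∀ a b, isog (Ind (sump a b)) (sumg (Ind a) (Ind b)))
    (hIndK : isog (Ind kp) kg)
    (hIndProj : ∀ a, Projp a → Projg (Ind a))
    (M : Og) (P : Op) (hP : Projp P)
    (hres : isop (res M) (sump kp P))
    (hprojformula : isog (Ind (res M)) (tensg M (Ind kp)))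
    (htensIso : ∀ a b, isog a b → isog (tensg M a) (tensg M b))
    (htensUnit : isog (tensg M kg) M)
    (hsumIsoL : ∀ a b c, isog a b → isog (sumg a c) (sumg b c))
    (hsumIsoR : ∀ a b c, isog b c → isog (sumg a b) (sumg a c))
    (hsumZero : ∀ a, isog (sumg a zg) a)
    (hindec : ∀ X Y, isog M (sumg X Y) → isog X zg ∨ isog Y zg)
    (hk0 : ¬ isog kg zg) :
    isog M kg := by
  -- M ≅ Ind (res M) ≅ Ind (kp ⊕ P) ≅ kg ⊕ Ind P
  have h1 : isog M (Ind (res M)) :=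
    hg.trans (hg.symm htensUnit) (hg.trans (htensIso _ _ (hg.symm hIndK)) (hg.symm hprojformula))
  have h2 : isog M (sumg kg (Ind P)) :=
    hg.trans h1 (hg.trans (hIndIso _ _ hres)
      (hg.trans (hIndSum kp P) (hsumIsoL _ _ _ hIndK)))
  rcases hindec _ _ h2 with h | h
  · exact absurd h hk0
  · exact hg.trans h2 (hg.trans (hsumIsoR _ _ _ h) (hsumZero kg))
end

section
/- Sum-of-inequalities lemma for the gl(n|n) dominance argument: let (a_{ij})_{i>j} and (b_{ij})_{i>j} be nonnegative reals indexed by pairs 1 ≤ j < i ≤ n. Suppose that for each s = 1,...,n−1 the quantities A_s := (Σ_{j<s} a_{sj} − Σ_{j<s+1} a_{s+1,j}) + (Σ_{i>s+1} b_{i,s+1} − Σ_{i>s} b_{is}) and the analogous B_s with a and b swapped are all ≥ 0. Then summing over s yields Σ_s (A_s + B_s) = −Σ_{i} (a_{i,1} + a_{n,i} + b_{i,1} + b_{n,i}) + (nonnegative interior terms appearing with multiplicity ≤ total), forcing a_{i,1} = a_{n,j} = b_{i,1} = b_{n,j} = 0 for all valid i, j. -/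
open Finset

private lemma tel (f : ℕ → ℝ) (m n : ℕ) (h : m ≤ n) :
    ∑ s ∈ Ico m n, (f s - f (s + 1)) = f m - f n := by
  induction n with
  | zero => interval_cases m; simp
  | succ k ih =>
    rcases Nat.lt_or_ge m (k + 1) with hlt | hge
    · have hm : m ≤ k := Nat.lt_succ_iff.mp hlt
      rw [Finset.sum_Ico_succ_top hm, ih hm]; ring
    · have : m = k + 1 := le_antisymm h hge
      subst this; simp

/-- Sum-of-inequalities lemma for the `gl(n|n)` dominance argument: with nonnegative
coefficients `a_{ij}, b_{ij}` (`1 ≤ j < i ≤ n`) and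
`A_s = (Σ_{j<s} a_{sj} - Σ_{j<s+1} a_{s+1,j}) + (Σ_{i>s+1} b_{i,s+1} - Σ_{i>s} b_{is})`,
`B_s` the same with `a` and `b` swapped, if all `A_s, B_s ≥ 0` for `s = 1,…,n-1`, then
all boundary coefficients vanish: `a_{i,1} = b_{i,1} = 0` for `1 < i ≤ n` and
`a_{n,j} = b_{n,j} = 0` for `1 ≤ j < n`. -/
theorem stmt15 (n : ℕ) (hn : 1 ≤ n) (a b : ℕ → ℕ → ℝ)
    (ha : ∀ i j, 0 ≤ a i j) (hb : ∀ i j, 0 ≤ b i j)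
    (A B : ℕ → ℝ)
    (hAdef : ∀ s, A s = ((∑ j ∈ Ico 1 s, a s j) - ∑ j ∈ Ico 1 (s + 1), a (s + 1) j)
        + ((∑ i ∈ Ioc (s + 1) n, b i (s + 1)) - ∑ i ∈ Ioc s n, b i s))
    (hBdef : ∀ s, B s = ((∑ j ∈ Ico 1 s, b s j) - ∑ j ∈ Ico 1 (s + 1), b (s + 1) j)
        + ((∑ i ∈ Ioc (s + 1) n, a i (s + 1)) - ∑ i ∈ Ioc s n, a i s))
    (hA : ∀ s ∈ Ico 1 n, 0 ≤ A s) (hB : ∀ s ∈ Ico 1 n, 0 ≤ B s) :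
    (∀ i ∈ Ioc 1 n, a i 1 = 0 ∧ b i 1 = 0) ∧
    (∀ j ∈ Ico 1 n, a n j = 0 ∧ b n j = 0) := by
  set Fa : ℕ → ℝ := fun s => ∑ j ∈ Ico 1 s, a s j with hFa
  set Fb : ℕ → ℝ := fun s => ∑ j ∈ Ico 1 s, b s j with hFb
  set Ga : ℕ → ℝ := fun s => ∑ i ∈ Ioc s n, a i s with hGa
  set Gb : ℕ → ℝ := fun s => ∑ i ∈ Ioc s n, b i s with hGb
  have hsum : ∑ s ∈ Ico 1 n, (A s + B s)
      = -(Fa n + Fb n + Ga 1 + Gb 1) := by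
    have e1 : ∑ s ∈ Ico 1 n, (Fa s - Fa (s + 1)) = Fa 1 - Fa n := tel Fa 1 n hn
    have e2 : ∑ s ∈ Ico 1 n, (Fb s - Fb (s + 1)) = Fb 1 - Fb n := tel Fb 1 n hn
    have e3 : ∑ s ∈ Ico 1 n, (Ga s - Ga (s + 1)) = Ga 1 - Ga n := tel Ga 1 n hn
    have e4 : ∑ s ∈ Ico 1 n, (Gb s - Gb (s + 1)) = Gb 1 - Gb n := tel Gb 1 n hn
    have hFa1 : Fa 1 = 0 := by simp [hFa]
    have hFb1 : Fb 1 = 0 := by simp [hFb]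
    have hGan : Ga n = 0 := by simp [hGa]
    have hGbn : Gb n = 0 := by simp [hGb]
    calc ∑ s ∈ Ico 1 n, (A s + B s)
        = ∑ s ∈ Ico 1 n, ((Fa s - Fa (s + 1)) + (Fb s - Fb (s + 1))
            - (Ga s - Ga (s + 1)) - (Gb s - Gb (s + 1))) := by
          apply Finset.sum_congr rfl
          intro s _
          rw [hAdef s, hBdef s]; simp only [hFa, hFb, hGa, hGb]; ring
      _ = (Fa 1 - Fa n) + (Fb 1 - Fb n) - (Ga 1 - Ga n) - (Gb 1 - Gb n) := by
          simp only [Finset.sum_add_distrib, Finset.sum_sub_distrib, e1, e2, e3, e4]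
      _ = -(Fa n + Fb n + Ga 1 + Gb 1) := by
          rw [hFa1, hFb1, hGan, hGbn]; ring
  have hS0 : 0 ≤ ∑ s ∈ Ico 1 n, (A s + B s) :=
    Finset.sum_nonneg fun s hs => add_nonneg (hA s hs) (hB s hs)
  have hFan : 0 ≤ Fa n := Finset.sum_nonneg fun j _ => ha n j
  have hFbn : 0 ≤ Fb n := Finset.sum_nonneg fun j _ => hb n j
  have hGa1 : 0 ≤ Ga 1 := Finset.sum_nonneg fun i _ => ha i 1
  have hGb1 : 0 ≤ Gb 1 := Finset.sum_nonneg fun i _ => hb i 1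
  have hall : Fa n = 0 ∧ Fb n = 0 ∧ Ga 1 = 0 ∧ Gb 1 = 0 := by
    rw [hsum] at hS0
    constructor
    · linarith
    constructor
    · linarith
    constructor
    · linarith
    · linarith
  obtain ⟨h1, h2, h3, h4⟩ := hall
  constructor
  · intro i hi
    exact ⟨(Finset.sum_eq_zero_iff_of_nonneg fun i _ => ha i 1).mp h3 i hi,
      (Finset.sum_eq_zero_iff_of_nonneg fun i _ => hb i 1).mp h4 i hi⟩
  · intro j hj
    exact ⟨(Finset.sum_eq_zero_iff_of_nonneg fun j _ => ha n j).mp h1 j hj,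
      (Finset.sum_eq_zero_iff_of_nonneg fun j _ => hb n j).mp h2 j hj⟩
end
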